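/- Let λ be a real number with 0 < λ < 1, and let F ≥ 1, 1 ≤ a ≤ F and n ≥ 1 be integers. Then H_λ(1 − n, a|F) = −(F^{n−1}·λ^a/n)·B_n(λ^F; a/F), i.e. the λ-partial zeta function interpolates the λ-Bernoulli polynomials at non-positive integers. -/

import Mathlib

/-- The λ-Bernoulli numbers `B_n(λ)`, defined by `B_0(λ) = Log λ / (λ - 1)` and, for `n ≥ 1`,
by the recurrence `λ·∑_{k=0}^{n} C(n,k)·B_k(λ) - B_n(λ) = (1 if n = 1, 0 if n ≥ 2)`,
encoding the generating function `(Log λ + t)/(λ e^t - 1) = ∑ B_n(λ) t^n/n!`. -/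
noncomputable def lambdaBernoulli (lam : ℂ) : ℕ → ℂ
  | 0 => Complex.log lam / (lam - 1)
  | n + 1 =>
      ((if n = 0 then (1 : ℂ) else 0) -
        lam * ∑ k : Fin (n + 1), ((n + 1).choose (k : ℕ) : ℂ) * lambdaBernoulli lam k) / (lam - 1)

/-- The λ-Bernoulli polynomials `B_n(λ; x) = ∑_{k=0}^{n} C(n,k)·B_k(λ)·x^{n-k}`. -/
noncomputable def lambdaBernoulliPoly (lam : ℂ) (n : ℕ) (x : ℂ) : ℂ :=
  ∑ k ∈ Finset.range (n + 1), (n.choose k : ℂ) * lambdaBernoulli lam k * x ^ (n - k)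

/-- The λ-partial zeta function, for real `0 < λ < 1` and integers `F ≥ 1`, `1 ≤ a ≤ F`:
`H_λ(s, a|F) = ∑_{m≥1, m≡a (mod F)} λ^m·m^{-s} - (log λ/(s - 1))·∑_{m≥1, m≡a (mod F)} λ^m·m^{1-s}`,
complex powers of the positive integer `m` being taken via the real logarithm. -/
noncomputable def lambdaPartialZeta (lam : ℝ) (F a : ℕ) (s : ℂ) : ℂ :=
  (∑' m : {m : ℕ // 0 < m ∧ m % F = a % F}, (lam : ℂ) ^ (m : ℕ) * ((m : ℕ) : ℂ) ^ (-s)) -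
    ((Real.log lam : ℂ) / (s - 1)) *
      ∑' m : {m : ℕ // 0 < m ∧ m % F = a % F}, (lam : ℂ) ^ (m : ℕ) * ((m : ℕ) : ℂ) ^ (1 - s)

namespace LBAux

noncomputable def T (q : ℝ) (j : ℕ) : ℂ := ∑' k : ℕ, (q : ℂ) ^ k * (k : ℂ) ^ j

lemma summT (q : ℝ) (h0 : 0 < q) (h1 : q < 1) (j : ℕ) :
    Summable (fun k : ℕ => (q : ℂ) ^ k * (k : ℂ) ^ j) := by
  have h : ‖(q : ℂ)‖ < 1 := by
    rw [Complex.norm_real, Real.norm_eq_abs, abs_of_pos h0]; exact h1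
  exact (summable_pow_mul_geometric_of_norm_lt_one j h).congr fun n => mul_comm _ _

lemma A_eq (q : ℝ) (h0 : 0 < q) (h1 : q < 1) (m : ℕ) :
    ∑ k ∈ Finset.range (m + 1), (m.choose k : ℂ) * T q k
      = ∑' j : ℕ, (q : ℂ) ^ j * ((j : ℂ) + 1) ^ m := by
  rw [eq_comm]
  have hterm : ∀ j : ℕ, (q : ℂ) ^ j * ((j : ℂ) + 1) ^ m
      = ∑ k ∈ Finset.range (m + 1), (m.choose k : ℂ) * ((q : ℂ) ^ j * (j : ℂ) ^ k) := by
    intro j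
    rw [add_pow, Finset.mul_sum]
    exact Finset.sum_congr rfl fun k _ => by ring
  rw [tsum_congr hterm,
    Summable.tsum_finsetSum (fun k _ => ((summT q h0 h1 k).mul_left ((m.choose k : ℂ))))]
  exact Finset.sum_congr rfl fun k _ => by rw [tsum_mul_left]; rfl

lemma qA (q : ℝ) (h0 : 0 < q) (h1 : q < 1) (m : ℕ) :
    (q : ℂ) * (∑' j : ℕ, (q : ℂ) ^ j * ((j : ℂ) + 1) ^ m)
      = T q m - (if m = 0 then 1 else 0) := by
  have hs := summT q h0 h1 m
  have h2 : T q m = (q : ℂ) ^ 0 * ((0 : ℕ) : ℂ) ^ m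
      + ∑' j : ℕ, (q : ℂ) ^ (j + 1) * (((j : ℕ) + 1 : ℕ) : ℂ) ^ m := hs.tsum_eq_zero_add
  have h3 : (q : ℂ) ^ 0 * ((0 : ℕ) : ℂ) ^ m = (if m = 0 then 1 else 0) := by
    cases m <;> simp
  rw [← tsum_mul_left]
  have h4 : ∀ j : ℕ, (q : ℂ) * ((q : ℂ) ^ j * ((j : ℂ) + 1) ^ m)
      = (q : ℂ) ^ (j + 1) * (((j : ℕ) + 1 : ℕ) : ℂ) ^ m := by
    intro j; push_cast; ring
  rw [tsum_congr h4, h2, h3]; ring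

lemma qAT (q : ℝ) (h0 : 0 < q) (h1 : q < 1) (m : ℕ) :
    (q : ℂ) * ∑ k ∈ Finset.range (m + 1), (m.choose k : ℂ) * T q k
      = T q m - (if m = 0 then 1 else 0) := by
  rw [A_eq q h0 h1 m, qA q h0 h1 m]

lemma qne (q : ℝ) (h0 : 0 < q) (h1 : q < 1) : (q : ℂ) - 1 ≠ 0 := by
  intro h
  have : (q : ℂ) = 1 := by linear_combination h
  exact absurd (Complex.ofReal_injective (by exact_mod_cast this)) (ne_of_lt h1)

lemma lB (q : ℝ) (h0 : 0 < q) (h1 : q < 1) (n : ℕ) :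
    lambdaBernoulli (q : ℂ) n
      = -(Real.log q : ℂ) * T q n - (n : ℂ) * T q (n - 1) := by
  induction n using Nat.strong_induction_on with
  | _ n IH =>
    match n with
    | 0 =>
      have hT0 : T q 0 = (1 - (q : ℂ))⁻¹ := by
        have h : ‖(q : ℂ)‖ < 1 := by
          rw [Complex.norm_real, Real.norm_eq_abs, abs_of_pos h0]; exact h1
        simp only [T, pow_zero, mul_one]
        exact tsum_geometric_of_norm_lt_one h
      have hlog : Complex.log (q : ℂ) = (Real.log q : ℂ) :=
        (Complex.ofReal_log h0.le).symm
      have h1q : (1 : ℂ) - q ≠ 0 := by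
        intro h; exact qne q h0 h1 (by linear_combination -h)
      rw [lambdaBernoulli, hlog, hT0]
      rw [Nat.cast_zero, zero_mul, sub_zero, div_eq_iff (qne q h0 h1)]
      field_simp
      ring
    | (m + 1) =>
      -- abbreviations
      set L : ℂ := (Real.log q : ℂ) with hL
      set V : ℂ := -L * T q (m + 1) - ((m : ℂ) + 1) * T q m with hV
      have hsum : (∑ k : Fin (m + 1), ((m + 1).choose (k : ℕ) : ℂ) * lambdaBernoulli (q : ℂ) k)
          = ∑ k ∈ Finset.range (m + 1), ((m + 1).choose k : ℂ) * lambdaBernoulli (q : ℂ) k :=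
        Fin.sum_univ_eq_sum_range (fun k => ((m + 1).choose k : ℂ) * lambdaBernoulli (q : ℂ) k) (m + 1)
      have hIH : ∀ k ∈ Finset.range (m + 1),
          ((m + 1).choose k : ℂ) * lambdaBernoulli (q : ℂ) k
            = ((m + 1).choose k : ℂ) * (-L * T q k - (k : ℂ) * T q (k - 1)) := by
        intro k hk
        rw [IH k (Finset.mem_range.mp hk)]
      -- the full sum over range (m+2)
      have hfull : ∑ k ∈ Finset.range (m + 2),
            ((m + 1).choose k : ℂ) * (-L * T q k - (k : ℂ) * T q (k - 1))
          = -L * (∑ k ∈ Finset.range (m + 2), ((m + 1).choose k : ℂ) * T q k)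
            - ((m : ℂ) + 1) * (∑ k ∈ Finset.range (m + 1), (m.choose k : ℂ) * T q k) := by
        have hsplit : ∑ k ∈ Finset.range (m + 2),
              ((m + 1).choose k : ℂ) * (-L * T q k - (k : ℂ) * T q (k - 1))
            = (∑ k ∈ Finset.range (m + 2), -L * (((m + 1).choose k : ℂ) * T q k))
              - ∑ k ∈ Finset.range (m + 2), ((m + 1).choose k : ℂ) * (k : ℂ) * T q (k - 1) := by
          rw [← Finset.sum_sub_distrib]
          exact Finset.sum_congr rfl fun k _ => by ring
        rw [hsplit, ← Finset.mul_sum]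
        congr 1
        rw [Finset.sum_range_succ']
        simp only [Nat.cast_zero, mul_zero, zero_mul, add_zero, Nat.zero_sub, mul_comm]
        rw [Finset.mul_sum]
        apply Finset.sum_congr rfl
        intro k hk
        have hch : ((m + 1).choose (k + 1) : ℂ) * ((k : ℂ) + 1) = ((m : ℂ) + 1) * (m.choose k : ℂ) := by
          have := Nat.add_one_mul_choose_eq m k
          have h2 : (m + 1) * m.choose k = (m + 1).choose (k + 1) * (k + 1) := this
          exact_mod_cast congrArg (fun t : ℕ => (t : ℂ)) h2.symm
        push_cast
        linear_combination T q k * hch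
      -- key computation
      have key : (q : ℂ) * (∑ k ∈ Finset.range (m + 1),
            ((m + 1).choose k : ℂ) * (-L * T q k - (k : ℂ) * T q (k - 1)))
          = (1 - (q : ℂ)) * V + (if m = 0 then 1 else 0) := by
        have hsum2 : ∑ k ∈ Finset.range (m + 1),
              ((m + 1).choose k : ℂ) * (-L * T q k - (k : ℂ) * T q (k - 1))
            = (∑ k ∈ Finset.range (m + 2),
                ((m + 1).choose k : ℂ) * (-L * T q k - (k : ℂ) * T q (k - 1))) - V := by
          have hbig := Finset.sum_range_succ
            (fun k => ((m + 1).choose k : ℂ) * (-L * T q k - (k : ℂ) * T q (k - 1))) (m + 1)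
          have hlast : ((m + 1).choose (m + 1) : ℂ)
              * (-L * T q (m + 1) - (((m + 1 : ℕ)) : ℂ) * T q ((m + 1) - 1)) = V := by
            rw [Nat.choose_self, hV]
            push_cast
            ring
          rw [hbig, hlast]
          ring
        rw [hsum2, hfull]
        have e1 := qAT q h0 h1 (m + 1)
        have e2 := qAT q h0 h1 m
        have hm1 : (m + 1 ≠ 0) := Nat.succ_ne_zero m
        rw [if_neg hm1] at e1
        have hV' : V = -L * T q (m + 1) - ((m : ℂ) + 1) * T q m := hV
        -- expanded: q * (-L * A(m+1) - (m+1) * A m - V)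
        --   = -L*(T(m+1)) - (m+1)*(T m - δ) - q*V  = V + (m+1)*δ - q*V
        have hδ : ((m : ℂ) + 1) * (if m = 0 then (1 : ℂ) else 0) = (if m = 0 then 1 else 0) := by
          split_ifs with h
          · subst h; norm_num
          · ring
        calc (q:ℂ) * (-L * (∑ k ∈ Finset.range (m + 2), ((m + 1).choose k : ℂ) * T q k)
            - ((m : ℂ) + 1) * (∑ k ∈ Finset.range (m + 1), (m.choose k : ℂ) * T q k) - V)
            = -L * ((q:ℂ) * ∑ k ∈ Finset.range (m + 2), ((m + 1).choose k : ℂ) * T q k)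
              - ((m : ℂ) + 1) * ((q:ℂ) * ∑ k ∈ Finset.range (m + 1), (m.choose k : ℂ) * T q k)
              - (q:ℂ) * V := by ring
          _ = -L * (T q (m + 1)) - ((m : ℂ) + 1) * (T q m - (if m = 0 then 1 else 0))
              - (q:ℂ) * V := by rw [e1, e2, sub_zero]
          _ = V + ((m : ℂ) + 1) * (if m = 0 then 1 else 0) - (q:ℂ) * V := by
              rw [hV']; ring
          _ = (1 - (q : ℂ)) * V + (if m = 0 then 1 else 0) := by rw [hδ]; ring
      rw [lambdaBernoulli, hsum, Finset.sum_congr rfl hIH]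
      rw [div_eq_iff (qne q h0 h1)]
      have h2 : (m + 1 : ℕ) - 1 = m := rfl
      rw [h2]
      push_cast
      rw [← hV]
      linear_combination -key

lemma Wexp (q : ℝ) (h0 : 0 < q) (h1 : q < 1) (j : ℕ) (x : ℂ) :
    ∑' k : ℕ, (q : ℂ) ^ k * ((k : ℂ) + x) ^ j
      = ∑ i ∈ Finset.range (j + 1), (j.choose i : ℂ) * T q i * x ^ (j - i) := by
  have hterm : ∀ k : ℕ, (q : ℂ) ^ k * ((k : ℂ) + x) ^ j
      = ∑ i ∈ Finset.range (j + 1),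
          ((j.choose i : ℂ) * x ^ (j - i)) * ((q : ℂ) ^ k * (k : ℂ) ^ i) := by
    intro k
    rw [add_pow, Finset.mul_sum]
    exact Finset.sum_congr rfl fun i _ => by ring
  rw [tsum_congr hterm,
    Summable.tsum_finsetSum (fun i _ => ((summT q h0 h1 i).mul_left ((j.choose i : ℂ) * x ^ (j - i))))]
  exact Finset.sum_congr rfl fun i _ => by rw [tsum_mul_left]; show _ * T q i = _; ring

lemma lBP (q : ℝ) (h0 : 0 < q) (h1 : q < 1) (m : ℕ) (x : ℂ) :
    lambdaBernoulliPoly (q : ℂ) (m + 1) x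
      = -(Real.log q : ℂ) * (∑' k : ℕ, (q : ℂ) ^ k * ((k : ℂ) + x) ^ (m + 1))
        - ((m : ℂ) + 1) * (∑' k : ℕ, (q : ℂ) ^ k * ((k : ℂ) + x) ^ m) := by
  set L : ℂ := (Real.log q : ℂ) with hLdef
  rw [Wexp q h0 h1 (m + 1) x, Wexp q h0 h1 m x]
  unfold lambdaBernoulliPoly
  have hIH : ∀ k ∈ Finset.range (m + 2),
      ((m + 1).choose k : ℂ) * lambdaBernoulli (q : ℂ) k * x ^ ((m + 1) - k)
        = ((m + 1).choose k : ℂ) * (-L * T q k - (k : ℂ) * T q (k - 1)) * x ^ ((m + 1) - k) := by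
    intro k _
    rw [lB q h0 h1 k]
  rw [Finset.sum_congr rfl hIH]
  have hsplit : ∑ k ∈ Finset.range (m + 2),
        ((m + 1).choose k : ℂ) * (-L * T q k - (k : ℂ) * T q (k - 1)) * x ^ ((m + 1) - k)
      = (∑ k ∈ Finset.range (m + 2),
          -L * (((m + 1).choose k : ℂ) * T q k * x ^ ((m + 1) - k)))
        - ∑ k ∈ Finset.range (m + 2),
            ((m + 1).choose k : ℂ) * (k : ℂ) * T q (k - 1) * x ^ ((m + 1) - k) := by
    rw [← Finset.sum_sub_distrib]
    exact Finset.sum_congr rfl fun k _ => by ring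
  rw [hsplit, ← Finset.mul_sum]
  congr 1
  rw [Finset.sum_range_succ']
  simp only [Nat.cast_zero, mul_zero, zero_mul, add_zero]
  rw [Finset.mul_sum]
  apply Finset.sum_congr rfl
  intro k hk
  have hch : ((m + 1).choose (k + 1) : ℂ) * ((k : ℂ) + 1) = ((m : ℂ) + 1) * (m.choose k : ℂ) := by
    have h2 : (m + 1) * m.choose k = (m + 1).choose (k + 1) * (k + 1) := Nat.add_one_mul_choose_eq m k
    exact_mod_cast congrArg (fun t : ℕ => (t : ℂ)) h2.symm
  push_cast
  linear_combination (T q k * x ^ (m - k)) * hch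

end LBAux

open LBAux

/-- for real `0 < λ < 1` and integers `F ≥ 1`, `1 ≤ a ≤ F`, `n ≥ 1`:
`H_λ(1 - n, a|F) = -(F^{n-1}·λ^a/n)·B_n(λ^F; a/F)`: the λ-partial zeta function interpolates
the λ-Bernoulli polynomials at non-positive integers. -/
theorem lambdaPartialZeta_interpolation (lam : ℝ) (h0 : 0 < lam) (h1 : lam < 1)
    (F a n : ℕ) (hF : 1 ≤ F) (ha1 : 1 ≤ a) (ha2 : a ≤ F) (hn : 1 ≤ n) :
    lambdaPartialZeta lam F a (1 - (n : ℂ)) =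
      -((F : ℂ) ^ (n - 1) * (lam : ℂ) ^ a / (n : ℂ)) *
        lambdaBernoulliPoly ((lam : ℂ) ^ F) n ((a : ℂ) / (F : ℂ)) := by
  obtain ⟨m, rfl⟩ : ∃ m, n = m + 1 := ⟨n - 1, by omega⟩
  set q : ℝ := lam ^ F with hqdef
  have hq0 : 0 < q := pow_pos h0 F
  have hq1 : q < 1 := pow_lt_one₀ h0.le h1 (by omega)
  have hFC : (F : ℂ) ≠ 0 := Nat.cast_ne_zero.mpr (by omega)
  have hcast : ((lam : ℂ)) ^ F = ((q : ℝ) : ℂ) := by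
    rw [hqdef]; push_cast; ring
  -- the bijection k ↦ a + F * k
  have hmem : ∀ k : ℕ, 0 < a + F * k ∧ (a + F * k) % F = a % F := by
    intro k
    exact ⟨by omega, Nat.add_mul_mod_self_left a F k⟩
  set f : ℕ → {m : ℕ // 0 < m ∧ m % F = a % F} :=
    fun k => ⟨a + F * k, hmem k⟩ with hfdef
  have hbij : Function.Bijective f := by
    constructor
    · intro k k' h
      have h2 : a + F * k = a + F * k' := congrArg Subtype.val h
      have : F * k = F * k' := by omega
      exact Nat.eq_of_mul_eq_mul_left (by omega) this
    · rintro ⟨m, hm0, hmod⟩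
      have ham : a ≤ m := by
        rcases eq_or_lt_of_le ha2 with h | h
        · have hz : m % F = 0 := by rw [hmod, h, Nat.mod_self]
          have := Nat.le_of_dvd hm0 (Nat.dvd_of_mod_eq_zero hz)
          omega
        · have : a % F = a := Nat.mod_eq_of_lt h
          have := Nat.mod_le m F
          omega
      have hdvd : F ∣ m - a := (Nat.modEq_iff_dvd' ham).mp hmod.symm
      refine ⟨(m - a) / F, ?_⟩
      apply Subtype.ext
      show a + F * ((m - a) / F) = m
      rw [Nat.mul_div_cancel' hdvd]
      omega
  set e : ℕ ≃ {m : ℕ // 0 < m ∧ m % F = a % F} := Equiv.ofBijective f hbij with hedef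
  -- the reindexed sums
  have hS : ∀ j : ℕ,
      (∑' m : {m : ℕ // 0 < m ∧ m % F = a % F}, (lam : ℂ) ^ (m : ℕ) * ((m : ℕ) : ℂ) ^ j)
        = (lam : ℂ) ^ a * ((F : ℂ) ^ j
            * ∑' k : ℕ, ((q : ℝ) : ℂ) ^ k * ((k : ℂ) + (a : ℂ) / (F : ℂ)) ^ j) := by
    intro j
    rw [← Equiv.tsum_eq e (fun m => (lam : ℂ) ^ (m : ℕ) * ((m : ℕ) : ℂ) ^ j)]
    have hterm : ∀ k : ℕ,
        (lam : ℂ) ^ ((e k : ℕ)) * (((e k : ℕ)) : ℂ) ^ j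
          = (lam : ℂ) ^ a * ((F : ℂ) ^ j
              * (((q : ℝ) : ℂ) ^ k * ((k : ℂ) + (a : ℂ) / (F : ℂ)) ^ j)) := by
      intro k
      have he : ((e k : ℕ)) = a + F * k := rfl
      rw [he]
      have h2 : ((a + F * k : ℕ) : ℂ) = (F : ℂ) * ((k : ℂ) + (a : ℂ) / (F : ℂ)) := by
        push_cast
        field_simp
        ring
      rw [pow_add, pow_mul, hcast, h2, mul_pow]
      ring
    rw [tsum_congr hterm, tsum_mul_left, tsum_mul_left]
  -- rewrite the cpow exponents
  have he1 : ∀ mm : {m : ℕ // 0 < m ∧ m % F = a % F},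
      (lam : ℂ) ^ (mm : ℕ) * ((mm : ℕ) : ℂ) ^ (-(1 - ((m + 1 : ℕ) : ℂ)))
        = (lam : ℂ) ^ (mm : ℕ) * ((mm : ℕ) : ℂ) ^ (m : ℕ) := by
    intro mm
    have h2 : (-(1 - ((m + 1 : ℕ) : ℂ))) = ((m : ℕ) : ℂ) := by push_cast; ring
    rw [h2, Complex.cpow_natCast]
  have he2 : ∀ mm : {m : ℕ // 0 < m ∧ m % F = a % F},
      (lam : ℂ) ^ (mm : ℕ) * ((mm : ℕ) : ℂ) ^ ((1 : ℂ) - (1 - ((m + 1 : ℕ) : ℂ)))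
        = (lam : ℂ) ^ (mm : ℕ) * ((mm : ℕ) : ℂ) ^ (m + 1 : ℕ) := by
    intro mm
    have h2 : ((1 : ℂ) - (1 - ((m + 1 : ℕ) : ℂ))) = ((m + 1 : ℕ) : ℂ) := by push_cast; ring
    rw [h2, Complex.cpow_natCast]
  have hlogq : (Real.log q : ℂ) = (F : ℂ) * (Real.log lam : ℂ) := by
    rw [hqdef, Real.log_pow]; push_cast; ring
  have hm1 : ((m : ℂ) + 1) ≠ 0 := Nat.cast_add_one_ne_zero m
  unfold lambdaPartialZeta
  rw [tsum_congr he1, tsum_congr he2, hS m, hS (m + 1), hcast,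
    lBP q hq0 hq1 m ((a : ℂ) / (F : ℂ)), hlogq]
  simp only [Nat.add_sub_cancel]
  set W1 : ℂ := ∑' k : ℕ, ((q : ℝ) : ℂ) ^ k * ((k : ℂ) + (a : ℂ) / (F : ℂ)) ^ m with hW1
  set W2 : ℂ := ∑' k : ℕ, ((q : ℝ) : ℂ) ^ k * ((k : ℂ) + (a : ℂ) / (F : ℂ)) ^ (m + 1) with hW2
  have hden : ((1 : ℂ) - ((m + 1 : ℕ) : ℂ)) - 1 = -((m : ℂ) + 1) := by push_cast; ring
  rw [hden, div_neg]
  push_cast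
  field_simp
  ring
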